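/- Let $\Lambda = \{(t_1,\dots,t_n) \in \mathbb{R}^n : t_1 + \cdots + t_n = k\}$ be a hyperplane and let $f(t_1,\dots,t_n) = \lambda_1 \sum_{i=1}^{n-1} t_i^2 + \lambda_2 t_n^2 - 2\sum_{1 \le i < j \le n} t_i t_j$ with $\lambda_1, \lambda_2 > 0$ satisfying $\lambda_2 = \frac{n-1}{\lambda_1 - n + 2}$ (with $\lambda_1 > n-2$). Then the global minimum of $f$ on $\Lambda$ is attained at $t_1 = \cdots = t_{n-1} = \frac{k}{\lambda_1 + 1}$, $t_n = \frac{k(\lambda_1 - n + 2)}{\lambda_1 + 1}$. -/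

import Mathlib

open Finset

lemma sq_sum_expand (t : ℕ → ℝ) (n : ℕ) :
    (∑ i ∈ range n, t i) ^ 2
      = ∑ i ∈ range n, (t i) ^ 2
        + 2 * ∑ i ∈ range n, ∑ j ∈ Ico (i + 1) n, t i * t j := by
  induction n with
  | zero => simp
  | succ n ih =>
    have hinner : ∑ i ∈ range (n+1), ∑ j ∈ Ico (i + 1) (n+1), t i * t j
        = (∑ i ∈ range n, ∑ j ∈ Ico (i + 1) n, t i * t j)
          + (∑ i ∈ range n, t i) * t n := by
      rw [sum_range_succ]
      have : ∀ i ∈ range n, ∑ j ∈ Ico (i + 1) (n+1), t i * t j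
          = (∑ j ∈ Ico (i + 1) n, t i * t j) + t i * t n := by
        intro i hi
        have hi' := mem_range.1 hi
        rw [Finset.sum_Ico_succ_top (by omega : i + 1 ≤ n)]
      rw [sum_congr rfl this, Finset.sum_add_distrib, Finset.sum_mul]
      simp
    rw [sum_range_succ, sum_range_succ, hinner, add_sq, ih]
    ring

lemma aux_min (m a b s T S : ℝ) (hm : 1 ≤ m) (ham : m < a) (hb1 : 1 < b)
    (hab : (a - m) * (b - 1) = m) (hCS : s ^ 2 ≤ m * S) :
    0 ≤ a * S + b * T ^ 2 - (s + T) ^ 2 := by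
  have hampos : (0:ℝ) < a - m := by linarith
  have ha0 : (0:ℝ) < a := by linarith
  have hexp : (a - m) * ((a - m) * s ^ 2 - 2 * m * s * T + m * (b - 1) * T ^ 2)
      = ((a - m) * s - m * T) ^ 2 := by linear_combination m * T ^ 2 * hab
  have key2 : 0 ≤ (a - m) * s ^ 2 - 2 * m * s * T + m * (b - 1) * T ^ 2 := by
    have h0 : 0 ≤ (a - m) * ((a - m) * s ^ 2 - 2 * m * s * T + m * (b - 1) * T ^ 2) := by
      rw [hexp]; exact sq_nonneg _
    nlinarith [h0, hampos]
  have h5 : 0 ≤ m * (a * S + b * T ^ 2 - (s + T) ^ 2) := by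
    nlinarith [key2, mul_nonneg ha0.le (sub_nonneg.2 hCS)]
  nlinarith [h5, hm]

theorem stmt_0 (n : ℕ) (hn : 2 ≤ n) (k lam1 lam2 : ℝ)
    (h1 : 0 < lam1) (h2 : 0 < lam2) (hgt : (n : ℝ) - 2 < lam1)
    (hrel : lam2 * (lam1 - (n : ℝ) + 2) = (n : ℝ) - 1)
    (f : (ℕ → ℝ) → ℝ)
    (hf : ∀ t : ℕ → ℝ,
      f t = lam1 * ∑ i ∈ range (n - 1), (t i) ^ 2 + lam2 * (t (n - 1)) ^ 2
        - 2 * ∑ i ∈ range n, ∑ j ∈ Ico (i + 1) n, t i * t j)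
    (p : ℕ → ℝ)
    (hp : ∀ i, p i = if i = n - 1 then k * (lam1 - (n : ℝ) + 2) / (lam1 + 1)
      else k / (lam1 + 1)) :
    ∀ t : ℕ → ℝ, (∑ i ∈ range n, t i = k) → f p ≤ f t := by
  obtain ⟨m, rfl⟩ : ∃ m, n = m + 1 := ⟨n - 1, by omega⟩
  have hm : 1 ≤ m := by omega
  have hmR : (1 : ℝ) ≤ (m : ℝ) := by exact_mod_cast hm
  have hcast : ((m + 1 : ℕ) : ℝ) = (m : ℝ) + 1 := by push_cast; ring
  set a := lam1 + 1 with ha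
  set b := lam2 + 1 with hb
  clear_value a b
  have ham : (m : ℝ) < a := by rw [hcast] at hgt; rw [ha]; linarith
  have hb1 : (1 : ℝ) < b := by rw [hb]; linarith
  have ha0 : (0:ℝ) < a := by linarith
  have hd : lam1 - ((m + 1 : ℕ) : ℝ) + 2 = a - m := by rw [hcast, ha]; ring
  have hab : (a - m) * (b - 1) = m := by
    rw [hd, hcast] at hrel
    calc (a - m) * (b - 1) = lam2 * (a - (m:ℝ)) := by rw [hb]; ring
    _ = (m : ℝ) := by linarith
  -- reduced form of f on the hyperplane
  have key : ∀ t : ℕ → ℝ, (∑ i ∈ range (m+1), t i = k) →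
      f t = a * (∑ i ∈ range m, (t i) ^ 2) + b * (t m) ^ 2 - k ^ 2 := by
    intro t ht
    have hsq := sq_sum_expand t (m+1)
    rw [ht] at hsq
    have hsum : ∑ i ∈ range (m+1), (t i)^2 = (∑ i ∈ range m, (t i)^2) + (t m)^2 :=
      sum_range_succ _ _
    rw [hf]
    simp only [Nat.add_sub_cancel]
    have h2s : (2:ℝ) * ∑ i ∈ range (m+1), ∑ j ∈ Ico (i + 1) (m+1), t i * t j
        = k^2 - ((∑ i ∈ range m, (t i)^2) + (t m)^2) := by
      rw [← hsum]; linarith [hsq]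
    rw [h2s, ha, hb]; ring
  intro t ht
  have hpsum : ∑ i ∈ range (m+1), p i = k := by
    have hc : ∀ i ∈ range m, p i = k / a := by
      intro i hi
      rw [hp i, if_neg (by simp at hi; omega)]
    rw [sum_range_succ, sum_congr rfl hc, sum_const, card_range, hp m,
      if_pos (by omega), hd]
    have ha0' : a ≠ 0 := ne_of_gt ha0
    field_simp
    rw [nsmul_eq_mul, div_eq_mul_inv, show a * (↑m * (k * a⁻¹)) = ↑m * k * (a * a⁻¹) by ring,
      mul_inv_cancel₀ ha0', mul_one]; ring
  rw [key t ht, key p hpsum]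
  -- value at p
  have hpsq : ∀ i ∈ range m, (p i)^2 = (k/a)^2 := by
    intro i hi
    rw [hp i, if_neg (by simp at hi; omega)]
  have hpm : p m = k * (a - m) / a := by
    rw [hp m, if_pos (by omega), hd]
  rw [sum_congr rfl hpsq, sum_const, card_range, hpm, nsmul_eq_mul]
  have hval : a * ((m : ℝ) * (k/a)^2) + b * (k * (a - m) / a) ^ 2 - k^2 = 0 := by
    have ham0 : a - (m:ℝ) ≠ 0 := by linarith
    have hbv : b = a / (a - m) := by
      rw [eq_div_iff ham0]; linear_combination hab
    rw [hbv]
    have ha0' : a ≠ 0 := ne_of_gt ha0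
    field_simp
    ring
  rw [hval]
  have hCS : (∑ i ∈ range m, t i) ^ 2 ≤ (m:ℝ) * ∑ i ∈ range m, (t i)^2 := by
    have h := sq_sum_le_card_mul_sum_sq (s := range m) (f := t)
    rwa [card_range] at h
  have hk : k = (∑ i ∈ range m, t i) + t m := by
    rw [← ht, sum_range_succ]
  rw [hk]
  exact aux_min (m:ℝ) a b _ _ _ hmR ham hb1 hab hCS
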